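/- Let (E,‖·‖_E) be a pseudo-normed real vector space, s < s_1 real numbers, q ∈ [1,∞], and f ∈ Σ^s_q(E). Define γ_n := 2^{−n(s_1−s)} ‖S_n f‖_{Σ^{s_1}_1} = 2^{−n(s_1−s)} ∑_{k=0}^n 2^{k s_1}‖f_k‖_E. Then the sequence γ = (γ_n) satisfies (1 − 2^{s−s_1}) ‖γ‖_{ℓ^q(ℕ)} ≤ ‖f‖_{Σ^s_q} ≤ ‖γ‖_{ℓ^q(ℕ)}; moreover, if q = ∞ then lim_{n→∞} γ_n = 0. -/

import Mathlib

open Filter MeasureTheory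
open scoped ENNReal NNReal

/-- A pseudo-norm on a real vector space: nonnegative, symmetric, subadditive,
and vanishing exactly at `0`. -/
structure IsPseudoNorm {E : Type*} [AddCommGroup E] [Module ℝ E] (N : E → ℝ) : Prop where
  nonneg : ∀ x, 0 ≤ N x
  neg : ∀ x, N (-x) = N x
  add_le : ∀ x y, N (x + y) ≤ N x + N y
  eq_zero_iff : ∀ x, N x = 0 ↔ x = 0

/-- The `Σ^s_q(E)` pseudo-norm of a sequence `f : ℕ → E`:
`(∑_k 2^{qks} ‖f_k‖_E^q)^{1/q}` for `q < ∞` and `sup_k 2^{ks} ‖f_k‖_E` for `q = ∞`. -/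
noncomputable def sigmaNorm {E : Type*} (N : E → ℝ) (s : ℝ) (q : ℝ≥0∞) (f : ℕ → E) : ℝ≥0∞ :=
  if q = ⊤ then ⨆ k : ℕ, ENNReal.ofReal ((2 : ℝ) ^ ((k : ℝ) * s) * N (f k))
  else (∑' k : ℕ, ENNReal.ofReal ((2 : ℝ) ^ ((k : ℝ) * s) * N (f k)) ^ q.toReal) ^ (1 / q.toReal)

/-- Membership in `Σ^s_q(E)`: finiteness of the norm when `q < ∞`, and
`2^{ks}‖f_k‖_E → 0` when `q = ∞`. -/
def memSigma {E : Type*} (N : E → ℝ) (s : ℝ) (q : ℝ≥0∞) (f : ℕ → E) : Prop :=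
  if q = ⊤ then Tendsto (fun k : ℕ => (2 : ℝ) ^ ((k : ℝ) * s) * N (f k)) atTop (nhds 0)
  else sigmaNorm N s q f < ⊤

/-- Friedrichs smoothing operator `S_n`: truncation of a sequence after index `n`. -/
def smoothS {E : Type*} [Zero E] (n : ℕ) (f : ℕ → E) : ℕ → E :=
  fun k => if k ≤ n then f k else 0

/-- The `ℓ^q(ℕ)` norm of a real sequence. -/
noncomputable def lqNormN (q : ℝ≥0∞) (γ : ℕ → ℝ) : ℝ≥0∞ :=
  if q = ⊤ then ⨆ n : ℕ, ENNReal.ofReal |γ n|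
  else (∑' n : ℕ, ENNReal.ofReal |γ n| ^ q.toReal) ^ (1 / q.toReal)

lemma iSup_rpow_nat {p : ℝ} (hp : 0 < p) (g : ℕ → ℝ≥0∞) :
    (⨆ m, g m) ^ p = ⨆ m, g m ^ p := by
  have happ : ∀ x : ℝ≥0∞, (ENNReal.orderIsoRpow p hp) x = x ^ p := fun x => rfl
  have h := (ENNReal.orderIsoRpow p hp).map_iSup g
  rw [happ] at h
  simp_rw [happ] at h
  exact h

lemma minkowski_tsum {p : ℝ} (hp : 1 ≤ p) (F : ℕ → ℕ → ℝ≥0∞) :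
    (∑' n, (∑' j, F j n) ^ p) ^ (1 / p) ≤ ∑' j, (∑' n, F j n ^ p) ^ (1 / p) := by
  have hp0 : 0 < p := lt_of_lt_of_le one_pos hp
  have hp0' : (0:ℝ) < 1 / p := one_div_pos.mpr hp0
  have hadd : ∀ g h : ℕ → ℝ≥0∞,
      (∑' n, (g n + h n) ^ p) ^ (1 / p) ≤
        (∑' n, g n ^ p) ^ (1 / p) + (∑' n, h n ^ p) ^ (1 / p) := by
    intro g h
    have := ENNReal.lintegral_Lp_add_le (μ := Measure.count (α := ℕ))
      (f := g) (g := h) (measurable_of_countable g).aemeasurable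
      (measurable_of_countable h).aemeasurable hp
    simpa [lintegral_count, Pi.add_apply] using this
  have hfin : ∀ m : ℕ,
      (∑' n, (∑ j ∈ Finset.range m, F j n) ^ p) ^ (1 / p) ≤
        ∑ j ∈ Finset.range m, (∑' n, F j n ^ p) ^ (1 / p) := by
    intro m
    induction m with
    | zero =>
      simp only [Finset.range_zero, Finset.sum_empty]
      simp_rw [ENNReal.zero_rpow_of_pos hp0]
      rw [tsum_zero, ENNReal.zero_rpow_of_pos hp0']
    | succ m ih =>
      calc (∑' n, (∑ j ∈ Finset.range (m+1), F j n) ^ p) ^ (1 / p)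
          = (∑' n, ((∑ j ∈ Finset.range m, F j n) + F m n) ^ p) ^ (1 / p) := by
            simp [Finset.sum_range_succ]
        _ ≤ (∑' n, (∑ j ∈ Finset.range m, F j n) ^ p) ^ (1 / p)
              + (∑' n, F m n ^ p) ^ (1 / p) := hadd _ _
        _ ≤ ∑ j ∈ Finset.range m, (∑' n, F j n ^ p) ^ (1 / p)
              + (∑' n, F m n ^ p) ^ (1 / p) := by gcongr
        _ = ∑ j ∈ Finset.range (m+1), (∑' n, F j n ^ p) ^ (1 / p) := by
            rw [Finset.sum_range_succ]
  have hmono : Monotone fun m => fun n => (∑ j ∈ Finset.range m, F j n) ^ p := by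
    intro m₁ m₂ hm n
    exact ENNReal.rpow_le_rpow (Finset.sum_le_sum_of_subset (Finset.range_subset_range.2 hm)) hp0.le
  have key : (∑' n, (∑' j, F j n) ^ p)
      = ⨆ m, ∑' n, (∑ j ∈ Finset.range m, F j n) ^ p := by
    have h1 : ∀ n, (∑' j, F j n) ^ p = ⨆ m, (∑ j ∈ Finset.range m, F j n) ^ p := by
      intro n
      rw [ENNReal.tsum_eq_iSup_nat, iSup_rpow_nat hp0]
    simp_rw [h1]
    rw [← lintegral_count, lintegral_iSup (fun m => measurable_of_countable _) hmono]
    simp_rw [lintegral_count]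
  rw [key, iSup_rpow_nat hp0']
  exact iSup_le fun m => (hfin m).trans (ENNReal.sum_le_tsum _)

theorem frequency_envelope_equiv {E : Type*} [AddCommGroup E] [Module ℝ E]
    (N : E → ℝ) (hN : IsPseudoNorm N) (s s₁ : ℝ) (hss₁ : s < s₁)
    (q : ℝ≥0∞) (hq : 1 ≤ q) (f : ℕ → E) (hf : memSigma N s q f)
    (γ : ℕ → ℝ)
    (hγ : ∀ n : ℕ, γ n = (2 : ℝ) ^ (-((n : ℝ) * (s₁ - s))) *
      ∑ k ∈ Finset.range (n + 1), (2 : ℝ) ^ ((k : ℝ) * s₁) * N (f k)) :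
    ENNReal.ofReal (1 - (2 : ℝ) ^ (s - s₁)) * lqNormN q γ ≤ sigmaNorm N s q f ∧
    sigmaNorm N s q f ≤ lqNormN q γ ∧
    (q = ⊤ → Tendsto γ atTop (nhds 0)) := by
  set a : ℕ → ℝ := fun k => (2 : ℝ) ^ ((k : ℝ) * s) * N (f k) with ha_def
  have han : ∀ k, 0 ≤ a k := fun k =>
    mul_nonneg (Real.rpow_nonneg (by norm_num) _) (hN.nonneg _)
  set r : ℝ := (2 : ℝ) ^ (s - s₁) with hr_def
  have hr0 : 0 < r := Real.rpow_pos_of_pos two_pos _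
  have hr1 : r < 1 := Real.rpow_lt_one_of_one_lt_of_neg one_lt_two (by linarith)
  -- rewrite γ as a convolution
  have hγ' : ∀ n, γ n = ∑ k ∈ Finset.range (n + 1), r ^ (n - k) * a k := by
    intro n
    rw [hγ n, Finset.mul_sum]
    refine Finset.sum_congr rfl fun k hk => ?_
    have hk' : k ≤ n := Nat.lt_succ_iff.mp (Finset.mem_range.mp hk)
    have hcoef : (2 : ℝ) ^ (-((n : ℝ) * (s₁ - s))) * (2 : ℝ) ^ ((k : ℝ) * s₁)
        = r ^ (n - k) * (2 : ℝ) ^ ((k : ℝ) * s) := by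
      rw [hr_def, ← Real.rpow_natCast ((2:ℝ) ^ (s - s₁)) (n - k),
        ← Real.rpow_mul (by norm_num : (0:ℝ) ≤ 2),
        ← Real.rpow_add two_pos, ← Real.rpow_add two_pos]
      congr 1
      have : ((n - k : ℕ) : ℝ) = (n : ℝ) - k := by
        rw [Nat.cast_sub hk']
      rw [this]; ring
    rw [ha_def, ← mul_assoc, hcoef, mul_assoc]
  have hγnn : ∀ n, 0 ≤ γ n := by
    intro n
    rw [hγ' n]
    exact Finset.sum_nonneg fun k _ => mul_nonneg (pow_nonneg hr0.le _) (han k)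
  set A : ℕ → ℝ≥0∞ := fun k => ENNReal.ofReal (a k) with hA_def
  set R : ℝ≥0∞ := ENNReal.ofReal r with hR_def
  have hG : ∀ n, ENNReal.ofReal (γ n)
      = ∑ k ∈ Finset.range (n + 1), R ^ (n - k) * A k := by
    intro n
    rw [hγ' n, ENNReal.ofReal_sum_of_nonneg
      (fun k _ => mul_nonneg (pow_nonneg hr0.le _) (han k))]
    refine Finset.sum_congr rfl fun k _ => ?_
    rw [ENNReal.ofReal_mul (pow_nonneg hr0.le _), ENNReal.ofReal_pow hr0.le]
  have habs : ∀ n, |γ n| = γ n := fun n => abs_of_nonneg (hγnn n)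
  have hAG : ∀ n, A n ≤ ENNReal.ofReal (γ n) := by
    intro n
    rw [hG n]
    have := Finset.single_le_sum (f := fun k => R ^ (n - k) * A k)
      (fun i _ => zero_le) (Finset.self_mem_range_succ n)
    simpa using this
  have hR1 : R < 1 := by
    rw [hR_def]; exact ENNReal.ofReal_lt_one.2 hr1
  have hcR : ENNReal.ofReal (1 - r) = 1 - R := by
    rw [ENNReal.ofReal_sub _ hr0.le, ENNReal.ofReal_one]
  have h1R0 : 1 - R ≠ 0 := (tsub_pos_of_lt hR1).ne'
  have h1Rtop : 1 - R ≠ ⊤ := (lt_of_le_of_lt tsub_le_self ENNReal.one_lt_top).ne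
  have hgeom : ∑' j : ℕ, R ^ j = (1 - R)⁻¹ := ENNReal.tsum_geometric R
  have hcancel : (1 - R) * (1 - R)⁻¹ = 1 := ENNReal.mul_inv_cancel h1R0 h1Rtop
  have hrefl : ∀ n, ∑ k ∈ Finset.range (n + 1), R ^ (n - k) * A k
      = ∑ j ∈ Finset.range (n + 1), R ^ j * A (n - j) := by
    intro n
    rw [← Finset.sum_range_reflect (fun k => R ^ (n - k) * A k) (n + 1)]
    refine Finset.sum_congr rfl fun j hj => ?_
    have hj' : j ≤ n := Nat.lt_succ_iff.mp (Finset.mem_range.mp hj)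
    congr 2
    omega
  refine ⟨?_, ?_, ?_⟩
  · -- lower bound
    rw [hcR]
    by_cases hqt : q = ⊤
    · subst hqt
      rw [lqNormN, sigmaNorm, if_pos rfl, if_pos rfl]
      simp_rw [habs]
      show (1 - R) * (⨆ n, ENNReal.ofReal (γ n)) ≤ ⨆ k, A k
      have hGle : ∀ n, ENNReal.ofReal (γ n) ≤ (1 - R)⁻¹ * ⨆ k, A k := by
        intro n
        rw [hG n, hrefl n]
        calc ∑ j ∈ Finset.range (n + 1), R ^ j * A (n - j)
            ≤ ∑ j ∈ Finset.range (n + 1), R ^ j * ⨆ k, A k :=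
              Finset.sum_le_sum fun j _ => mul_le_mul_right (le_iSup A _) _
          _ = (∑ j ∈ Finset.range (n + 1), R ^ j) * ⨆ k, A k :=
              (Finset.sum_mul _ _ _).symm
          _ ≤ (∑' j : ℕ, R ^ j) * ⨆ k, A k :=
              mul_le_mul_left (ENNReal.sum_le_tsum _) _
          _ = (1 - R)⁻¹ * ⨆ k, A k := by rw [hgeom]
      calc (1 - R) * ⨆ n, ENNReal.ofReal (γ n)
          ≤ (1 - R) * ((1 - R)⁻¹ * ⨆ k, A k) := mul_le_mul_right (iSup_le hGle) _
        _ = ⨆ k, A k := by rw [← mul_assoc, hcancel, one_mul]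
    · rw [lqNormN, sigmaNorm, if_neg hqt, if_neg hqt]
      simp_rw [habs]
      set p := q.toReal with hp_def
      have hp : 1 ≤ p := by
        have := ENNReal.toReal_mono hqt hq
        simpa using this
      have hp0 : 0 < p := lt_of_lt_of_le one_pos hp
      have hp0' : (0:ℝ) < 1 / p := one_div_pos.mpr hp0
      show (1 - R) * (∑' n, ENNReal.ofReal (γ n) ^ p) ^ (1 / p)
          ≤ (∑' k, A k ^ p) ^ (1 / p)
      set S : ℝ≥0∞ := (∑' k, A k ^ p) ^ (1 / p) with hS_def
      set F : ℕ → ℕ → ℝ≥0∞ := fun j n => if j ≤ n then R ^ j * A (n - j) else 0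
        with hF_def
      have hGF : ∀ n, ENNReal.ofReal (γ n) = ∑' j, F j n := by
        intro n
        rw [hG n, hrefl n,
          tsum_eq_sum (s := Finset.range (n + 1))
            (f := fun j => F j n)
            (fun j hj => if_neg (by simp only [Finset.mem_range] at hj; omega))]
        exact Finset.sum_congr rfl fun j hj =>
          (if_pos (by simp only [Finset.mem_range] at hj; omega)).symm
      have hmain : (∑' n, ENNReal.ofReal (γ n) ^ p) ^ (1 / p) ≤ (1 - R)⁻¹ * S := by
        calc (∑' n, ENNReal.ofReal (γ n) ^ p) ^ (1 / p)
            = (∑' n, (∑' j, F j n) ^ p) ^ (1 / p) := by simp_rw [hGF]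
          _ ≤ ∑' j, (∑' n, F j n ^ p) ^ (1 / p) := minkowski_tsum hp F
          _ = ∑' j : ℕ, R ^ j * S := by
              refine tsum_congr fun j => ?_
              have hshift : ∑' n, F j n ^ p = ∑' m, (R ^ j * A m) ^ p := by
                have hinj : Function.Injective (fun m : ℕ => m + j) :=
                  add_left_injective j
                rw [← Function.Injective.tsum_eq hinj
                  (f := fun n => F j n ^ p) ?_]
                · refine tsum_congr fun m => ?_
                  simp [hF_def, Nat.le_add_left, Nat.add_sub_cancel]
                · intro n hn
                  simp only [Function.mem_support] at hn
                  refine ⟨n - j, ?_⟩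
                  by_contra hcon
                  have hjn : ¬ j ≤ n := by
                    intro h; exact hcon (by simpa using Nat.sub_add_cancel h)
                  apply hn
                  rw [hF_def]
                  simp only [hjn, if_false]
                  exact ENNReal.zero_rpow_of_pos hp0
              rw [hshift]
              simp_rw [ENNReal.mul_rpow_of_nonneg _ _ hp0.le]
              rw [ENNReal.tsum_mul_left,
                ENNReal.mul_rpow_of_nonneg _ _ hp0'.le]
              congr 1
              rw [← ENNReal.rpow_natCast R j, ← ENNReal.rpow_mul,
                ← ENNReal.rpow_mul]
              congr 1
              field_simp
          _ = (∑' j : ℕ, R ^ j) * S := ENNReal.tsum_mul_right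
          _ = (1 - R)⁻¹ * S := by rw [hgeom]
      calc (1 - R) * (∑' n, ENNReal.ofReal (γ n) ^ p) ^ (1 / p)
          ≤ (1 - R) * ((1 - R)⁻¹ * S) := mul_le_mul_right hmain _
        _ = S := by rw [← mul_assoc, hcancel, one_mul]
  · -- upper bound
    by_cases hqt : q = ⊤
    · subst hqt
      rw [lqNormN, sigmaNorm, if_pos rfl, if_pos rfl]
      simp_rw [habs]
      exact iSup_mono hAG
    · rw [lqNormN, sigmaNorm, if_neg hqt, if_neg hqt]
      simp_rw [habs]
      have hp0 : (0:ℝ) ≤ 1 / q.toReal := by positivity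
      refine ENNReal.rpow_le_rpow (ENNReal.tsum_le_tsum fun k => ?_) hp0
      exact ENNReal.rpow_le_rpow (hAG k) ENNReal.toReal_nonneg
  · -- tendsto
    intro hqt
    subst hqt
    rw [memSigma, if_pos rfl] at hf
    have hfa : Tendsto a atTop (nhds 0) := hf
    rw [Metric.tendsto_atTop]
    intro ε hε
    have h1r : (0:ℝ) < 1 - r := by linarith
    set δ := ε * (1 - r) / 2 with hδdef
    have hδ : 0 < δ := by positivity
    obtain ⟨M, hM⟩ := Metric.tendsto_atTop.mp hfa δ hδ
    have hMa : ∀ k, M ≤ k → a k < δ := by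
      intro k hk
      have := hM k hk
      rwa [Real.dist_eq, sub_zero, abs_of_nonneg (han k)] at this
    set C := ∑ k ∈ Finset.range M, a k with hCdef
    have htC : Tendsto (fun m : ℕ => r ^ m * C) atTop (nhds 0) := by
      have := (tendsto_pow_atTop_nhds_zero_of_lt_one hr0.le hr1).mul_const C
      simpa using this
    obtain ⟨M₂, hM₂⟩ := Metric.tendsto_atTop.mp htC (ε / 2) (half_pos hε)
    have hM₂' : ∀ m, M₂ ≤ m → r ^ m * C < ε / 2 := by
      intro m hm
      have := hM₂ m hm
      rw [Real.dist_eq, sub_zero] at this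
      exact (le_abs_self _).trans_lt this
    refine ⟨M + M₂, fun n hn => ?_⟩
    rw [Real.dist_eq, sub_zero, abs_of_nonneg (hγnn n), hγ' n]
    have hMn : M ≤ n + 1 := by omega
    have hsplit : ∑ k ∈ Finset.range (n + 1), r ^ (n - k) * a k
        = ∑ k ∈ Finset.range M, r ^ (n - k) * a k
          + ∑ k ∈ Finset.Ico M (n + 1), r ^ (n - k) * a k := by
      have h := Finset.sum_Ico_consecutive (fun k => r ^ (n - k) * a k)
        (Nat.zero_le M) hMn
      simp only [Finset.range_eq_Ico]
      exact h.symm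
    have hb1 : ∑ k ∈ Finset.range M, r ^ (n - k) * a k ≤ r ^ (n - M) * C := by
      rw [hCdef, Finset.mul_sum]
      refine Finset.sum_le_sum fun k hk => ?_
      have hkM : k < M := Finset.mem_range.mp hk
      have hpow : r ^ (n - k) ≤ r ^ (n - M) :=
        pow_le_pow_of_le_one hr0.le hr1.le (by omega)
      exact mul_le_mul_of_nonneg_right hpow (han k)
    have hb1' : r ^ (n - M) * C < ε / 2 := hM₂' (n - M) (by omega)
    have hgeo : ∑ j ∈ Finset.range (n + 1), r ^ j ≤ (1 - r)⁻¹ := by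
      have hsummable : Summable (fun j : ℕ => r ^ j) :=
        summable_geometric_of_lt_one hr0.le hr1
      have h := Summable.sum_le_tsum (Finset.range (n + 1))
        (fun i _ => pow_nonneg hr0.le i) hsummable
      rwa [tsum_geometric_of_lt_one hr0.le hr1] at h
    have hb2 : ∑ k ∈ Finset.Ico M (n + 1), r ^ (n - k) * a k ≤ δ * (1 - r)⁻¹ := by
      calc ∑ k ∈ Finset.Ico M (n + 1), r ^ (n - k) * a k
          ≤ ∑ k ∈ Finset.Ico M (n + 1), r ^ (n - k) * δ :=
            Finset.sum_le_sum fun k hk =>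
              mul_le_mul_of_nonneg_left
                (le_of_lt (hMa k (Finset.mem_Ico.mp hk).1))
                (pow_nonneg hr0.le _)
        _ = (∑ k ∈ Finset.Ico M (n + 1), r ^ (n - k)) * δ := by
            rw [Finset.sum_mul]
        _ ≤ (∑ k ∈ Finset.range (n + 1), r ^ (n - k)) * δ := by
            refine mul_le_mul_of_nonneg_right
              (Finset.sum_le_sum_of_subset_of_nonneg ?_ ?_) hδ.le
            · intro x hx
              simp only [Finset.mem_Ico] at hx
              simp only [Finset.mem_range]
              omega
            · intro i _ _
              exact pow_nonneg hr0.le _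
        _ = (∑ j ∈ Finset.range (n + 1), r ^ j) * δ := by
            rw [← Finset.sum_range_reflect (fun j => r ^ j) (n + 1)]
            refine congrArg (· * δ) (Finset.sum_congr rfl fun j hj => ?_)
            norm_num
        _ ≤ (1 - r)⁻¹ * δ := mul_le_mul_of_nonneg_right hgeo hδ.le
        _ = δ * (1 - r)⁻¹ := mul_comm _ _
    have hδ2 : δ * (1 - r)⁻¹ = ε / 2 := by
      rw [hδdef]
      field_simp
    calc ∑ k ∈ Finset.range (n + 1), r ^ (n - k) * a k
        = ∑ k ∈ Finset.range M, r ^ (n - k) * a k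
          + ∑ k ∈ Finset.Ico M (n + 1), r ^ (n - k) * a k := hsplit
      _ ≤ r ^ (n - M) * C + δ * (1 - r)⁻¹ := add_le_add hb1 hb2
      _ < ε / 2 + ε / 2 := add_lt_add_of_lt_of_le hb1' (le_of_eq hδ2)
      _ = ε := add_halves ε
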